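/- arXiv:2604.26487 — 6 statements merged into one kernel-verified Lean document; each statement's English description precedes it below -/
import Mathlib

section
/- Let M > 0 and define the sequence Q_0 = 0, Q_n = (M^2 + M·Q_{n-1} − Q_{n-1}^2)/(3M − 2Q_{n-1}) for n ≥ 1. Then for every n ≥ 0, Q_n ∈ [0, M); in particular the recursion is well defined (the denominator is strictly positive). -/
theorem stackelberg_aggregate_mem_Ico
    (M : ℝ) (hM : 0 < M) (Q : ℕ → ℝ)
    (hQ0 : Q 0 = 0)
    (hQ : ∀ n : ℕ, Q (n + 1) = (M ^ 2 + M * Q n - (Q n) ^ 2) / (3 * M - 2 * Q n)) :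
    ∀ n : ℕ, Q n ∈ Set.Ico (0 : ℝ) M ∧ 0 < 3 * M - 2 * Q n := by
  intro n
  induction n with
  | zero => constructor <;> simp [hQ0] <;> nlinarith
  | succ k ih =>
    obtain ⟨⟨h0, h1⟩, hd⟩ := ih
    have hnum : 0 ≤ M ^ 2 + M * Q k - (Q k) ^ 2 := by nlinarith
    have hlt : Q (k + 1) < M := by
      rw [hQ k, div_lt_iff₀ hd]
      nlinarith
    have hge : 0 ≤ Q (k + 1) := by
      rw [hQ k]; exact div_nonneg hnum hd.le
    exact ⟨⟨hge, hlt⟩, by nlinarith⟩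
end

section
/- Let M > 0 and define Q_0 = 0, Q_n = (M^2 + M·Q_{n-1} − Q_{n-1}^2)/(3M − 2Q_{n-1}). Then the sequence (Q_n) is strictly increasing. -/
theorem stackelberg_aggregate_strictMono
    (M : ℝ) (hM : 0 < M) (Q : ℕ → ℝ)
    (hQ0 : Q 0 = 0)
    (hQ : ∀ n : ℕ, Q (n + 1) = (M ^ 2 + M * Q n - (Q n) ^ 2) / (3 * M - 2 * Q n)) :
    StrictMono Q := by
  have key : ∀ n, 0 ≤ Q n ∧ Q n < M := by
    intro n
    induction n with
    | zero => rw [hQ0]; exact ⟨le_refl _, hM⟩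
    | succ n ih =>
      obtain ⟨h0, hlt⟩ := ih
      have hden : 0 < 3 * M - 2 * Q n := by nlinarith
      rw [hQ n]
      constructor
      · apply div_nonneg _ hden.le; nlinarith
      · rw [div_lt_iff₀ hden]; nlinarith
  apply strictMono_nat_of_lt_succ
  intro n
  obtain ⟨h0, hlt⟩ := key n
  have hden : 0 < 3 * M - 2 * Q n := by nlinarith
  rw [hQ n, lt_div_iff₀ hden]
  nlinarith [sq_nonneg (M - Q n)]
end

section
/- Define λ_0 = 0 and λ_m = (1 + λ_{m−1} − λ_{m−1}^2)/(3 − 2λ_{m−1}) for m ≥ 1. Then 0 ≤ λ_m < 1 for all m, the sequence (λ_m) is strictly increasing, and λ_m → 1 as m → ∞. -/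
theorem lambda_seq_properties
    (l : ℕ → ℝ) (hl0 : l 0 = 0)
    (hl : ∀ m : ℕ, l (m + 1) = (1 + l m - (l m) ^ 2) / (3 - 2 * l m)) :
    (∀ m : ℕ, 0 ≤ l m ∧ l m < 1) ∧ StrictMono l ∧
      Filter.Tendsto l Filter.atTop (nhds 1) := by
  have hb : ∀ m : ℕ, 0 ≤ l m ∧ l m < 1 := by
    intro m
    induction m with
    | zero => simp [hl0]
    | succ n ih =>
      obtain ⟨h0, h1⟩ := ih
      have hd : (0:ℝ) < 3 - 2 * l n := by linarith
      rw [hl n]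
      constructor
      · apply div_nonneg _ hd.le; nlinarith
      · rw [div_lt_one hd]; nlinarith
  have hmono : StrictMono l := by
    apply strictMono_nat_of_lt_succ
    intro n
    obtain ⟨h0, h1⟩ := hb n
    have hd : (0:ℝ) < 3 - 2 * l n := by linarith
    rw [hl n, lt_div_iff₀ hd]
    nlinarith [sq_nonneg (1 - l n)]
  refine ⟨hb, hmono, ?_⟩
  have hbdd : BddAbove (Set.range l) := by
    refine ⟨1, ?_⟩
    rintro x ⟨m, rfl⟩
    exact (hb m).2.le
  set a := ⨆ m, l m with ha
  have hta : Filter.Tendsto l Filter.atTop (nhds a) :=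
    tendsto_atTop_ciSup hmono.monotone hbdd
  have ha1 : a ≤ 1 := ciSup_le fun m => (hb m).2.le
  have ha0 : 0 ≤ a := le_trans (by simp [hl0]) (le_ciSup hbdd 0)
  have hcont : ContinuousAt (fun x : ℝ => (1 + x - x ^ 2) / (3 - 2 * x)) a := by
    apply ContinuousAt.div
    · fun_prop
    · fun_prop
    · intro h; linarith
  have h2 : Filter.Tendsto (fun m => (1 + l m - (l m) ^ 2) / (3 - 2 * l m))
      Filter.atTop (nhds ((1 + a - a ^ 2) / (3 - 2 * a))) := hcont.tendsto.comp hta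
  have h3 : Filter.Tendsto (fun m => l (m + 1)) Filter.atTop (nhds a) :=
    hta.comp (Filter.tendsto_add_atTop_nat 1)
  have h4 : Filter.Tendsto (fun m => l (m + 1)) Filter.atTop
      (nhds ((1 + a - a ^ 2) / (3 - 2 * a))) := by
    simpa only [hl] using h2
  have heq : a = (1 + a - a ^ 2) / (3 - 2 * a) := tendsto_nhds_unique h3 h4
  have hda : (0:ℝ) < 3 - 2 * a := by linarith
  have : a * (3 - 2 * a) = 1 + a - a ^ 2 := by
    rw [eq_div_iff hda.ne'] at heq; linarith
  have : a = 1 := by nlinarith [sq_nonneg (1 - a)]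
  rwa [this] at hta
end

section
/- Let M > 0, let Q_n^S be defined by Q_0^S = 0, Q_n^S = (M^2 + M·Q_{n−1}^S − (Q_{n−1}^S)^2)/(3M − 2Q_{n−1}^S), and let Q_n^C = Mn/(n + 2). Then Q_n^S ≥ Q_n^C for all n ≥ 1, with equality at n = 1 and strict inequality Q_n^S > Q_n^C for all n ≥ 2. -/
theorem stackelberg_ge_cournot
    (M : ℝ) (hM : 0 < M) (QS : ℕ → ℝ)
    (hQS0 : QS 0 = 0)
    (hQS : ∀ n : ℕ, QS (n + 1) = (M ^ 2 + M * QS n - (QS n) ^ 2) / (3 * M - 2 * QS n))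
    (QC : ℕ → ℝ) (hQC : ∀ n : ℕ, QC n = M * n / (n + 2)) :
    (∀ n : ℕ, 1 ≤ n → QC n ≤ QS n) ∧ QS 1 = QC 1 ∧
      ∀ n : ℕ, 2 ≤ n → QC n < QS n := by
  have hQS1 : QS 1 = M / 3 := by
    rw [hQS 0, hQS0]
    field_simp
    ring
  have hQC1 : QC 1 = M / 3 := by
    rw [hQC 1]
    norm_num
  have key : ∀ n : ℕ, 1 ≤ n → QC n ≤ QS n ∧ QS n < M ∧ (2 ≤ n → QC n < QS n) := by
    intro n hn
    induction n with
    | zero => omega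
    | succ k ih =>
      rcases Nat.lt_or_ge k 1 with hk | hk
      · interval_cases k
        refine ⟨by rw [hQS1, hQC1], by rw [hQS1]; linarith, by omega⟩
      · obtain ⟨h1, h2, _⟩ := ih hk
        set q := QS k with hq
        have ht1 : (1 : ℝ) ≤ (k : ℝ) := by exact_mod_cast hk
        have hden : (0 : ℝ) < (k : ℝ) + 2 := by linarith
        have hq0 : 0 ≤ q := by
          refine le_trans ?_ h1
          rw [hQC k]
          positivity
        have hqk : M * (k : ℝ) ≤ q * ((k : ℝ) + 2) := by
          have := h1
          rw [hQC k, div_le_iff₀ hden] at this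
          linarith
        have hdpos : 0 < 3 * M - 2 * q := by linarith
        have hgoal : QC (k + 1) < QS (k + 1) := by
          rw [hQS k, hQC (k + 1)]
          push_cast
          rw [div_lt_div_iff₀ (by linarith) hdpos]
          nlinarith [mul_nonneg (sub_nonneg.mpr hqk) (le_of_lt (sub_pos.mpr h2)),
            mul_pos (sub_pos.mpr h2) hM, mul_pos hdpos hM, sq_nonneg (M - q),
            mul_nonneg (mul_nonneg hq0 hq0) (sub_nonneg.mpr ht1)]
        have hlt : QS (k + 1) < M := by
          rw [hQS k, div_lt_iff₀ hdpos]
          nlinarith [mul_pos (sub_pos.mpr h2) (show 0 < 2 * M - q by linarith)]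
        exact ⟨le_of_lt hgoal, hlt, fun _ => hgoal⟩
  refine ⟨fun n hn => (key n hn).1, by rw [hQS1, hQC1], fun n hn => (key n (by omega)).2.2 hn⟩
end

section
/- Let (X, ρ) be a complete metric space and T : X → X satisfy ρ(Tx, Ty) ≤ k₁ρ(x,y) + k₂(ρ(x,Tx) + ρ(y,Ty)) + k₃(ρ(x,Ty) + ρ(y,Tx)) for all x, y ∈ X, where k₁, k₂, k₃ ≥ 0 and k₁ + 2k₂ + 2k₃ < 1. Then T has a unique fixed point ξ, and for every x₀ ∈ X the Picard iteration xₙ = T xₙ₋₁ converges to ξ with ρ(ξ, xₙ) ≤ (kⁿ/(1−k))·ρ(x₀, x₁), where k = (k₁ + k₂ + k₃)/(1 − k₂ − k₃). -/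
/-- Hardy–Rogers fixed point theorem (symmetrized form), with a priori error
estimate for the Picard iteration. -/
theorem hardy_rogers_fixed_point
    {X : Type*} [MetricSpace X] [CompleteSpace X] [Nonempty X]
    (T : X → X) (k₁ k₂ k₃ : ℝ) (hk₁ : 0 ≤ k₁) (hk₂ : 0 ≤ k₂) (hk₃ : 0 ≤ k₃)
    (hsum : k₁ + 2 * k₂ + 2 * k₃ < 1)
    (hT : ∀ x y : X, dist (T x) (T y) ≤
      k₁ * dist x y + k₂ * (dist x (T x) + dist y (T y)) +
        k₃ * (dist x (T y) + dist y (T x))) :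
    ∃ ξ : X, T ξ = ξ ∧ (∀ η : X, T η = η → η = ξ) ∧
      ∀ x₀ : X,
        Filter.Tendsto (fun n : ℕ => T^[n] x₀) Filter.atTop (nhds ξ) ∧
        ∀ n : ℕ, dist ξ (T^[n] x₀) ≤
          ((k₁ + k₂ + k₃) / (1 - k₂ - k₃)) ^ n / (1 - (k₁ + k₂ + k₃) / (1 - k₂ - k₃))
            * dist x₀ (T x₀) := by
  set k : ℝ := (k₁ + k₂ + k₃) / (1 - k₂ - k₃) with hk_def
  have hpos : 0 < 1 - k₂ - k₃ := by linarith
  have hk0 : 0 ≤ k := div_nonneg (by linarith) hpos.le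
  have hk1 : k < 1 := by rw [hk_def, div_lt_one hpos]; linarith
  -- key contraction on consecutive iterates
  have key : ∀ x : X, dist (T x) (T (T x)) ≤ k * dist x (T x) := by
    intro x
    have h := hT x (T x)
    have htri : dist x (T (T x)) ≤ dist x (T x) + dist (T x) (T (T x)) :=
      dist_triangle _ _ _
    have hself : dist (T x) (T x) = 0 := dist_self _
    rw [hk_def, div_mul_eq_mul_div, le_div_iff₀ hpos]
    nlinarith [dist_nonneg (x := x) (y := T x)]
  have geom : ∀ x : X, ∀ n : ℕ,
      dist (T^[n] x) (T^[n+1] x) ≤ dist x (T x) * k ^ n := by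
    intro x n
    induction n with
    | zero => simp
    | succ n ih =>
      have h1 : T^[n+1] x = T (T^[n] x) := Function.iterate_succ_apply' T n x
      have h2 : T^[n+2] x = T (T^[n+1] x) := Function.iterate_succ_apply' T (n+1) x
      rw [h2, h1]
      calc dist (T (T^[n] x)) (T (T (T^[n] x))) ≤ k * dist (T^[n] x) (T (T^[n] x)) :=
            key _
        _ = k * dist (T^[n] x) (T^[n+1] x) := by rw [h1]
        _ ≤ k * (dist x (T x) * k ^ n) := by
            exact mul_le_mul_of_nonneg_left ih hk0
        _ = dist x (T x) * k ^ (n+1) := by ring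
  -- every Picard sequence converges, and its limit is a fixed point
  have conv : ∀ x₀ : X, ∃ ξ : X,
      Filter.Tendsto (fun n : ℕ => T^[n] x₀) Filter.atTop (nhds ξ) := by
    intro x₀
    have hc : CauchySeq (fun n : ℕ => T^[n] x₀) :=
      cauchySeq_of_le_geometric k (dist x₀ (T x₀)) hk1
        (geom x₀)
    exact cauchySeq_tendsto_of_complete hc
  have fixed : ∀ x₀ ξ : X,
      Filter.Tendsto (fun n : ℕ => T^[n] x₀) Filter.atTop (nhds ξ) → T ξ = ξ := by
    intro x₀ ξ hlim
    have hlim' : Filter.Tendsto (fun n : ℕ => T^[n+1] x₀) Filter.atTop (nhds ξ) :=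
      hlim.comp (Filter.tendsto_add_atTop_nat 1)
    have hstep : Filter.Tendsto
        (fun n : ℕ => dist (T^[n] x₀) (T^[n+1] x₀)) Filter.atTop (nhds 0) := by
      have : Filter.Tendsto (fun n : ℕ => dist (T^[n] x₀) (T^[n+1] x₀))
          Filter.atTop (nhds (dist ξ ξ)) :=
        (hlim.dist hlim')
      simpa using this
    have hA : Filter.Tendsto (fun n : ℕ => dist (T ξ) (T^[n+1] x₀))
        Filter.atTop (nhds (dist (T ξ) ξ)) := (tendsto_const_nhds (x := T ξ)).dist hlim'
    have hB : Filter.Tendsto (fun n : ℕ =>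
        k₁ * dist ξ (T^[n] x₀) + k₂ * (dist ξ (T ξ) + dist (T^[n] x₀) (T^[n+1] x₀)) +
          k₃ * (dist ξ (T^[n+1] x₀) + dist (T^[n] x₀) (T ξ)))
        Filter.atTop
        (nhds (k₁ * 0 + k₂ * (dist ξ (T ξ) + 0) + k₃ * (0 + dist ξ (T ξ)))) := by
      have cξ : Filter.Tendsto (fun _ : ℕ => ξ) Filter.atTop (nhds ξ) :=
        tendsto_const_nhds
      have l1 : Filter.Tendsto (fun n : ℕ => dist ξ (T^[n] x₀)) Filter.atTop (nhds 0) := by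
        have := cξ.dist hlim
        simpa using this
      have l2 : Filter.Tendsto (fun n : ℕ => dist ξ (T^[n+1] x₀)) Filter.atTop (nhds 0) := by
        have := cξ.dist hlim'
        simpa using this
      have l3 : Filter.Tendsto (fun n : ℕ => dist (T^[n] x₀) (T ξ)) Filter.atTop
          (nhds (dist ξ (T ξ))) := hlim.dist (tendsto_const_nhds (x := T ξ))
      exact ((((l1.const_mul k₁)).add
        (((tendsto_const_nhds.add hstep)).const_mul k₂)).add
        (((l2.add l3)).const_mul k₃))
    have hle : dist (T ξ) ξ ≤ k₁ * 0 + k₂ * (dist ξ (T ξ) + 0) + k₃ * (0 + dist ξ (T ξ)) := by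
      refine le_of_tendsto_of_tendsto' hA hB ?_
      intro n
      have := hT ξ (T^[n] x₀)
      have h1 : T (T^[n] x₀) = T^[n+1] x₀ := (Function.iterate_succ_apply' T n x₀).symm
      rw [h1] at this
      exact this
    have hd : dist (T ξ) ξ = 0 := by
      have hsym : dist ξ (T ξ) = dist (T ξ) ξ := dist_comm _ _
      nlinarith [dist_nonneg (x := T ξ) (y := ξ)]
    exact dist_eq_zero.mp hd
  -- uniqueness
  have uniq : ∀ a b : X, T a = a → T b = b → a = b := by
    intro a b ha hb
    have h := hT a b
    rw [ha, hb] at h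
    have hd : dist a b = 0 := by
      have h1 := dist_self a
      have h2 := dist_self b
      have h3 : dist b a = dist a b := dist_comm _ _
      nlinarith [dist_nonneg (x := a) (y := b)]
    exact dist_eq_zero.mp hd
  obtain ⟨ξ, hξ⟩ := conv (Classical.arbitrary X)
  have hfix : T ξ = ξ := fixed _ _ hξ
  refine ⟨ξ, hfix, fun η hη => uniq η ξ hη hfix, fun x₀ => ?_⟩
  obtain ⟨ξ', hξ'⟩ := conv x₀
  have : ξ' = ξ := uniq ξ' ξ (fixed _ _ hξ') hfix
  rw [this] at hξ'
  refine ⟨hξ', fun n => ?_⟩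
  have hb := dist_le_of_le_geometric_of_tendsto k (dist x₀ (T x₀)) hk1
    (geom x₀) hξ' n
  calc dist ξ (T^[n] x₀) = dist (T^[n] x₀) ξ := dist_comm _ _
    _ ≤ dist x₀ (T x₀) * k ^ n / (1 - k) := hb
    _ = k ^ n / (1 - k) * dist x₀ (T x₀) := by ring
end

section
/- Under the hypotheses of the tripled Hardy–Rogers theorem with X₁ = X₂ = X₃ = X and d₁ = d₂ = d₃ = d, if the unique fixed point (x*, y*, z*) of S satisfies the local triple cross symmetry property S¹(y*,z*,x*) = S²(x*,y*,z*), S²(y*,z*,x*) = S³(x*,y*,z*), S³(y*,z*,x*) = S¹(x*,y*,z*), then x* = y* = z*. -/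
/-- If the fixed point of a tripled Hardy–Rogers map on `X³` (with the sum metric)
satisfies the local triple cross symmetry property, then its three components
coincide. -/
theorem tripled_cross_symmetry_diagonal
    {X : Type*} [MetricSpace X]
    (S : X × X × X → X × X × X)
    (S₁ S₂ S₃ : X × X × X → X)
    (hScomp : ∀ p : X × X × X, S p = (S₁ p, S₂ p, S₃ p))
    (M₁ : X × X × X → X × X × X → ℝ)
    (hM₁ : ∀ p q : X × X × X,
      M₁ p q = dist p.1 q.1 + dist p.2.1 q.2.1 + dist p.2.2 q.2.2)
    (k₁ k₂ k₃ : ℝ) (hk₁ : 0 ≤ k₁) (hk₂ : 0 ≤ k₂) (hk₃ : 0 ≤ k₃)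
    (hsum : k₁ + 2 * k₂ + 2 * k₃ < 1)
    (hS : ∀ p q : X × X × X, M₁ (S p) (S q) ≤
      k₁ * M₁ p q + k₂ * (M₁ p (S p) + M₁ q (S q)) +
        k₃ * (M₁ p (S q) + M₁ q (S p)))
    (x y z : X) (hfix : S (x, y, z) = (x, y, z))
    (hsym₁ : S₁ (y, z, x) = S₂ (x, y, z))
    (hsym₂ : S₂ (y, z, x) = S₃ (x, y, z))
    (hsym₃ : S₃ (y, z, x) = S₁ (x, y, z)) :
    x = y ∧ y = z := by
  have hcomp := hScomp (x, y, z)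
  rw [hfix] at hcomp
  have h1 : S₁ (x, y, z) = x := (Prod.mk.injEq _ _ _ _ ▸ hcomp.symm).1
  have h2 : S₂ (x, y, z) = y := by
    have := congrArg (fun p => p.2.1) hcomp.symm; simpa using this
  have h3 : S₃ (x, y, z) = z := by
    have := congrArg (fun p => p.2.2) hcomp.symm; simpa using this
  have hfix2 : S (y, z, x) = (y, z, x) := by
    rw [hScomp (y, z, x), hsym₁, hsym₂, hsym₃, h1, h2, h3]
  have hkey := hS (x, y, z) (y, z, x)
  rw [hfix, hfix2] at hkey
  set M := M₁ (x, y, z) (y, z, x) with hM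
  have hMself : ∀ p : X × X × X, M₁ p p = 0 := by
    intro p; rw [hM₁]; simp
  have hMsymm : M₁ (y, z, x) (x, y, z) = M := by
    rw [hM, hM₁, hM₁]; rw [dist_comm x y, dist_comm y z, dist_comm z x]
  rw [hMself, hMself, hMsymm] at hkey
  have hMnonneg : 0 ≤ M := by
    rw [hM, hM₁]; positivity
  have hM0 : M = 0 := by nlinarith
  rw [hM, hM₁] at hM0
  have hd1 : dist x y = 0 := by
    have := dist_nonneg (x := x) (y := y)
    have := dist_nonneg (x := y) (y := z)
    have := dist_nonneg (x := z) (y := x)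
    simp only at hM0; linarith [dist_nonneg (x := y) (y := z), dist_nonneg (x := z) (y := x), dist_nonneg (x := x) (y := y)]
  have hd2 : dist y z = 0 := by
    simp only at hM0
    linarith [dist_nonneg (x := z) (y := x), dist_nonneg (x := y) (y := z)]
  exact ⟨dist_eq_zero.mp hd1, dist_eq_zero.mp hd2⟩
end
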